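/- Let T be a tree and v1 x1 ... xn v2 a path between leaves. With C_k = f_{x_k}(X_k), C_{\le k-1} and C_{\ge k+2} as defined, if C_{\le k-1} < C_{\ge k+2} and C_k > C_{k+1}, then the tree S obtained from T by swapping the components X_k and X_{k+1} (reattaching X_{k+1} at position k and X_k at position k+1 on the path) satisfies f(S) > f(T), where f denotes the total number of subtrees. Moreover f(S) - f(T) = (C_k - C_{k+1})(C_{\ge k+2} - C_{\le k-1}). -/

import Mathlib

open SimpleGraph

/-- The total number of subtrees of `G`: nonempty connected induced sub-vertex-sets. -/
noncomputable def numSubtrees {V : Type*} [Fintype V] (G : SimpleGraph V) : ℕ :=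
  Set.ncard {s : Set V | s.Nonempty ∧ (G.induce s).Connected}

/-- The number of subtrees of (the induced subgraph of `G` on) the vertex set `A`
that contain the vertex `u`. -/
noncomputable def numSubtreesIn {V : Type*} [Fintype V] (G : SimpleGraph V)
    (A : Set V) (u : V) : ℕ :=
  Set.ncard {s : Set V | u ∈ s ∧ s ⊆ A ∧ (G.induce s).Connected}

/-- The set of vertices reachable from `u` in `G`. -/
def reachSet {V : Type*} (G : SimpleGraph V) (u : V) : Set V :=
  {v | G.Reachable u v}

namespace CompSwitch

variable {V : Type*} {G : SimpleGraph V}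

lemma mem_reachSet {u v : V} : v ∈ reachSet G u ↔ G.Reachable u v := Iff.rfl

lemma reachable_induce_of_walk {t : Set V} : ∀ {u v : V} (w : G.Walk u v),
    (∀ z ∈ w.support, z ∈ t) → ∀ (hu : u ∈ t) (hv : v ∈ t),
    (G.induce t).Reachable ⟨u, hu⟩ ⟨v, hv⟩ := by
  intro u v w
  induction w with
  | nil => intro _ hu hv; rfl
  | @cons u b v h p ih =>
    intro hw hu hv
    have hb : b ∈ t := hw b (by simp)
    have h1 : (G.induce t).Adj ⟨u, hu⟩ ⟨b, hb⟩ := by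
      simp only [comap_adj, Function.Embedding.coe_subtype]
      exact h
    exact h1.reachable.trans (ih (fun z hz => hw z (by simp [hz])) hb hv)

lemma exists_walk_of_induce_reachable {t : Set V} {x y : ↥t}
    (h : (G.induce t).Reachable x y) : ∃ w : G.Walk ↑x ↑y, ∀ z ∈ w.support, z ∈ t := by
  obtain ⟨w⟩ := h
  induction w with
  | @nil u => exact ⟨Walk.nil, by rintro z hz; simp at hz; subst hz; exact u.2⟩
  | @cons u b v h p ih =>
    obtain ⟨w', hw'⟩ := ih
    have hub : G.Adj ↑u ↑b := h
    refine ⟨Walk.cons hub w', ?_⟩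
    intro z hz
    rw [Walk.support_cons] at hz
    rcases List.mem_cons.mp hz with rfl | hz
    · exact u.2
    · exact hw' z hz

lemma induce_connected_iff_good {t : Set V} {p : V} (hp : p ∈ t) :
    (G.induce t).Connected ↔ ∀ y ∈ t, ∃ w : G.Walk p y, ∀ z ∈ w.support, z ∈ t := by
  constructor
  · intro h y hy
    exact exists_walk_of_induce_reachable (h.preconnected ⟨p, hp⟩ ⟨y, hy⟩)
  · intro h
    rw [connected_iff]
    refine ⟨?_, ⟨⟨p, hp⟩⟩⟩
    rintro ⟨u, hu⟩ ⟨v, hv⟩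
    obtain ⟨w1, hw1⟩ := h u hu
    obtain ⟨w2, hw2⟩ := h v hv
    exact (reachable_induce_of_walk w1 hw1 hp hu).symm.trans
      (reachable_induce_of_walk w2 hw2 hp hv)

lemma exists_crossing {A : Set V} : ∀ {u v : V} (w : G.Walk u v), u ∈ A → v ∉ A →
    ∃ a b, G.Adj a b ∧ a ∈ A ∧ b ∉ A ∧ a ∈ w.support ∧ b ∈ w.support := by
  intro u v w
  induction w with
  | nil => intro hu hv; exact absurd hu hv
  | @cons u b v h p ih =>
    intro hu hv
    by_cases hb : b ∈ A
    · obtain ⟨a', b', h1, h2, h3, h4, h5⟩ := ih hb hv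
      exact ⟨a', b', h1, h2, h3, by simp [h4], by simp [h5]⟩
    · exact ⟨u, b, h, hu, hb, by simp, by simp⟩

lemma stay {P : Set V} {p : V}
    (hcross : ∀ u v, G.Adj u v → u ∈ P → v ∉ P → u = p)
    {y : V} (hp : p ∈ P) (hy : y ∈ P) (w : G.Walk p y) (hw : w.IsPath) :
    ∀ z ∈ w.support, z ∈ P := by
  classical
  intro z hz
  by_contra hzP
  obtain ⟨u', v', hadj, hu', hv', hus, hvs⟩ :=
    exists_crossing (A := {a | a ∉ P}) (w.dropUntil z hz) hzP (by simpa using hy)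
  have hv'P : v' ∈ P := by simpa using hv'
  have hvp : v' = p := hcross v' u' hadj.symm hv'P hu'
  subst hvp
  have hsplit := w.take_spec hz
  have hnd : w.support.Nodup := hw.support_nodup
  rw [← hsplit, Walk.support_append] at hnd
  have hp1 : v' ∈ (w.takeUntil z hz).support := Walk.start_mem_support _
  rw [Walk.support_eq_cons (w.dropUntil z hz)] at hvs
  rcases List.mem_cons.mp hvs with h1 | h1
  · exact hzP (h1 ▸ hv'P)
  · exact (List.disjoint_of_nodup_append hnd) hp1 h1

lemma path_eq (hT : G.IsAcyclic) {u v : V} {w1 w2 : G.Walk u v}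
    (h1 : w1.IsPath) (h2 : w2.IsPath) : w1 = w2 := by
  have := hT.path_unique ⟨w1, h1⟩ ⟨w2, h2⟩
  exact congrArg Subtype.val this

lemma reachable_deleteEdges_iff (F : Set (Sym2 V)) (u v : V) :
    (G.deleteEdges F).Reachable u v ↔
      ∃ w : G.Walk u v, w.IsPath ∧ ∀ e ∈ w.edges, e ∉ F := by
  classical
  constructor
  · rintro ⟨w⟩
    obtain ⟨p, hp⟩ := w.toPath
    have hsub : ∀ e ∈ p.edges, e ∈ G.edgeSet \ F := fun e he => by
      have h2 := p.edges_subset_edgeSet he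
      rwa [edgeSet_deleteEdges] at h2
    refine ⟨p.transfer G (fun e he => (hsub e he).1), hp.transfer _, ?_⟩
    intro e he
    rw [Walk.edges_transfer] at he
    exact (hsub e he).2
  · rintro ⟨w, -, hF⟩
    exact ⟨w.toDeleteEdges F (fun e he => hF e he)⟩

lemma good_transfer {G' : SimpleGraph V} {s : Set V}
    (h : ∀ u v, u ∈ s → v ∈ s → G.Adj u v → ∃ w : G'.Walk u v, ∀ z ∈ w.support, z ∈ s) :
    ∀ {u v : V} (w : G.Walk u v), (∀ z ∈ w.support, z ∈ s) →
      ∃ w' : G'.Walk u v, ∀ z ∈ w'.support, z ∈ s := by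
  intro u v w
  induction w with
  | nil => intro hw; exact ⟨Walk.nil, hw⟩
  | @cons u b v hadj p ih =>
    intro hw
    have hu : u ∈ s := hw _ (by simp)
    have hb : b ∈ s := hw _ (by simp)
    obtain ⟨w1, hw1⟩ := h u b hu hb hadj
    obtain ⟨w2, hw2⟩ := ih (fun z hz => hw z (by simp [hz]))
    refine ⟨w1.append w2, ?_⟩
    intro z hz
    rw [Walk.support_append] at hz
    rcases List.mem_append.mp hz with hz | hz
    · exact hw1 z hz
    · exact hw2 z (List.mem_of_mem_tail hz)

lemma reach_closed {Z : Set V} (hcl : ∀ u v, G.Adj u v → u ∈ Z → v ∈ Z) :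
    ∀ {u v : V}, G.Reachable u v → u ∈ Z → v ∈ Z := by
  intro u v h hu
  obtain ⟨w⟩ := h
  induction w with
  | nil => exact hu
  | @cons u b v h p ih => exact ih (hcl u b h hu)

lemma ncard_sprod {α β : Type*} (s : Set α) (t : Set β) :
    (s ×ˢ t).ncard = s.ncard * t.ncard := by
  rw [← Nat.card_coe_set_eq, ← Nat.card_coe_set_eq, ← Nat.card_coe_set_eq,
    ← Nat.card_prod]
  exact Nat.card_congr (Equiv.Set.prod s t)

lemma induce_singleton_connected (G : SimpleGraph V) (v : V) : (G.induce {v}).Connected := by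
  rw [connected_iff]
  refine ⟨fun u w => ?_, ⟨⟨v, rfl⟩⟩⟩
  have huw : u = w := Subtype.ext (u.2.trans w.2.symm)
  rw [huw]

lemma numSubtreesIn_singleton {V : Type*} [Fintype V] (G : SimpleGraph V) (v : V) :
    numSubtreesIn G {v} v = 1 := by
  unfold numSubtreesIn
  have h : {s : Set V | v ∈ s ∧ s ⊆ {v} ∧ (G.induce s).Connected} = {{v}} := by
    ext s
    simp only [Set.mem_setOf_eq, Set.mem_singleton_iff]
    constructor
    · rintro ⟨h1, h2, -⟩
      exact subset_antisymm h2 (Set.singleton_subset_iff.mpr h1)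
    · rintro rfl
      exact ⟨rfl, le_rfl, induce_singleton_connected G v⟩
  rw [h, Set.ncard_singleton]

lemma reachSet_del_eq_singleton {v w : V}
    (huniq : ∀ z, G.Adj v z → z = w) :
    reachSet (G.deleteEdges {s(v, w)}) v = {v} := by
  ext z
  simp only [Set.mem_singleton_iff, reachSet, Set.mem_setOf_eq]
  constructor
  · rintro ⟨p⟩
    cases p with
    | nil => rfl
    | @cons u b v' h q =>
      rw [deleteEdges_adj] at h
      exact absurd (by rw [huniq _ h.1]; exact rfl) h.2
  · rintro rfl
    exact Reachable.refl z

lemma numSubtreesIn_congr {V : Type*} [Fintype V] (G G' : SimpleGraph V) (P : Set V) (p : V)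
    (h : ∀ u v, u ∈ P → v ∈ P → (G.Adj u v ↔ G'.Adj u v)) :
    numSubtreesIn G P p = numSubtreesIn G' P p := by
  unfold numSubtreesIn
  congr 1
  ext s
  simp only [Set.mem_setOf_eq]
  refine and_congr_right fun hp => and_congr_right fun hsub => ?_
  have he : G.induce s = G'.induce s := by
    ext u v
    exact h u v (hsub u.2) (hsub v.2)
  rw [he]

lemma fam_card {V : Type*} [Fintype V] (G : SimpleGraph V) (P Q : Set V) (p q r : V)
    (hp : p ∈ P) (hq : q ∈ Q) (hPQ : ∀ z, z ∈ P → z ∈ Q → False)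
    (hpq : G.Adj p q) (hrP : r ∉ P) (hrQ : r ∉ Q)
    (hcrossP : ∀ u v, G.Adj u v → u ∈ P → v ∉ P → u = p)
    (hcrossQ : ∀ u v, G.Adj u v → u ∈ Q → v ∉ Q → u = q)
    (hsep : ∀ u v, G.Adj u v → u ∉ P → u ∉ Q → (v ∈ P ∨ v ∈ Q) → u = r) :
    {s : Set V | (s.Nonempty ∧ (G.induce s).Connected) ∧ p ∈ s ∧ q ∈ s ∧ r ∉ s}.ncard
      = numSubtreesIn G P p * numSubtreesIn G Q q := by
  classical
  set Fam := {s : Set V | (s.Nonempty ∧ (G.induce s).Connected) ∧ p ∈ s ∧ q ∈ s ∧ r ∉ s}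
    with hFam
  set P1 := {t : Set V | p ∈ t ∧ t ⊆ P ∧ (G.induce t).Connected} with hP1
  set Q1 := {t : Set V | q ∈ t ∧ t ⊆ Q ∧ (G.induce t).Connected} with hQ1
  have key1 : ∀ s ∈ Fam, (s ∩ P) ∈ P1 ∧ (s ∩ Q) ∈ Q1 ∧ (s ∩ P) ∪ (s ∩ Q) = s := by
    rintro s ⟨⟨hne, hconn⟩, hps, hqs, hrs⟩
    have hgood := (induce_connected_iff_good hps).mp hconn
    have hsub : ∀ y ∈ s, y ∈ P ∨ y ∈ Q := by
      intro y hy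
      by_contra hyy
      push_neg at hyy
      obtain ⟨w, hw⟩ := hgood y hy
      obtain ⟨u', v', hadj, hu', hv', hus, hvs⟩ :=
        exists_crossing (A := {z | z ∉ P ∧ z ∉ Q}) w.reverse hyy
          (by simp only [Set.mem_setOf_eq, not_and]; intro hc; exact absurd hp hc)
      have hv'' : v' ∈ P ∨ v' ∈ Q := by
        by_contra hc; push_neg at hc; exact hv' ⟨hc.1, hc.2⟩
      have hur : u' = r := hsep u' v' hadj hu'.1 hu'.2 hv''
      rw [Walk.support_reverse] at hus
      exact hrs (hur ▸ hw u' (List.mem_reverse.mp hus))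
    have hgoodq : ∀ y ∈ s, ∃ w : G.Walk q y, ∀ z ∈ w.support, z ∈ s := by
      intro y hy
      obtain ⟨w1, hw1⟩ := hgood q hqs
      obtain ⟨w2, hw2⟩ := hgood y hy
      refine ⟨w1.reverse.append w2, ?_⟩
      intro z hz
      rw [Walk.support_append] at hz
      rcases List.mem_append.mp hz with hz | hz
      · rw [Walk.support_reverse] at hz
        exact hw1 z (List.mem_reverse.mp hz)
      · exact hw2 z (List.mem_of_mem_tail hz)
    have hPpiece : ∀ y ∈ s ∩ P, ∃ w : G.Walk p y, ∀ z ∈ w.support, z ∈ s ∩ P := by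
      rintro y ⟨hys, hyP⟩
      obtain ⟨w, hw⟩ := hgood y hys
      refine ⟨w.toPath, fun z hz => ?_⟩
      have hzs : z ∈ s := hw z (w.support_toPath_subset hz)
      exact ⟨hzs, stay hcrossP hp hyP w.toPath w.toPath.2 z hz⟩
    have hQpiece : ∀ y ∈ s ∩ Q, ∃ w : G.Walk q y, ∀ z ∈ w.support, z ∈ s ∩ Q := by
      rintro y ⟨hys, hyQ⟩
      obtain ⟨w, hw⟩ := hgoodq y hys
      refine ⟨w.toPath, fun z hz => ?_⟩
      have hzs : z ∈ s := hw z (w.support_toPath_subset hz)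
      exact ⟨hzs, stay hcrossQ hq hyQ w.toPath w.toPath.2 z hz⟩
    refine ⟨⟨⟨hps, hp⟩, Set.inter_subset_right,
        (induce_connected_iff_good (t := s ∩ P) ⟨hps, hp⟩).mpr hPpiece⟩,
      ⟨⟨hqs, hq⟩, Set.inter_subset_right,
        (induce_connected_iff_good (t := s ∩ Q) ⟨hqs, hq⟩).mpr hQpiece⟩, ?_⟩
    ext y
    constructor
    · rintro (⟨hy, -⟩ | ⟨hy, -⟩) <;> exact hy
    · intro hy
      rcases hsub y hy with h | h
      · exact Or.inl ⟨hy, h⟩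
      · exact Or.inr ⟨hy, h⟩
  have key2 : ∀ t1 ∈ P1, ∀ t2 ∈ Q1,
      (t1 ∪ t2) ∈ Fam ∧ (t1 ∪ t2) ∩ P = t1 ∧ (t1 ∪ t2) ∩ Q = t2 := by
    rintro t1 ⟨hpt1, ht1P, ht1c⟩ t2 ⟨hqt2, ht2Q, ht2c⟩
    refine ⟨⟨⟨⟨p, Or.inl hpt1⟩, ?_⟩, Or.inl hpt1, Or.inr hqt2, ?_⟩, ?_, ?_⟩
    · refine (induce_connected_iff_good (t := t1 ∪ t2) (Or.inl (a := p ∈ t1) hpt1)).mpr ?_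
      rintro y (hy | hy)
      · obtain ⟨w, hw⟩ := (induce_connected_iff_good hpt1).mp ht1c y hy
        exact ⟨w, fun z hz => Or.inl (hw z hz)⟩
      · obtain ⟨w, hw⟩ := (induce_connected_iff_good hqt2).mp ht2c y hy
        refine ⟨Walk.cons hpq w, ?_⟩
        intro z hz
        rw [Walk.support_cons] at hz
        rcases List.mem_cons.mp hz with rfl | hz
        · exact Or.inl hpt1
        · exact Or.inr (hw z hz)
    · rintro (h | h)
      exacts [hrP (ht1P h), hrQ (ht2Q h)]
    · ext z
      constructor
      · rintro ⟨hz | hz, hzP⟩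
        · exact hz
        · exact absurd (hPQ z hzP (ht2Q hz)) not_false
      · intro hz
        exact ⟨Or.inl hz, ht1P hz⟩
    · ext z
      constructor
      · rintro ⟨hz | hz, hzQ⟩
        · exact absurd (hPQ z (ht1P hz) hzQ) not_false
        · exact hz
      · intro hz
        exact ⟨Or.inr hz, ht2Q hz⟩
  have himg : Fam = (fun z : Set V × Set V => z.1 ∪ z.2) '' (P1 ×ˢ Q1) := by
    ext s
    constructor
    · intro hs
      obtain ⟨h1, h2, h3⟩ := key1 s hs
      exact ⟨(s ∩ P, s ∩ Q), Set.mem_prod.mpr ⟨h1, h2⟩, h3⟩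
    · rintro ⟨⟨t1, t2⟩, hmem, rfl⟩
      rw [Set.mem_prod] at hmem
      exact (key2 t1 hmem.1 t2 hmem.2).1
  have hinj : Set.InjOn (fun z : Set V × Set V => z.1 ∪ z.2) (P1 ×ˢ Q1) := by
    rintro ⟨t1, t2⟩ hm ⟨t1', t2'⟩ hm' heq
    rw [Set.mem_prod] at hm hm'
    obtain ⟨-, e1, e2⟩ := key2 t1 hm.1 t2 hm.2
    obtain ⟨-, e1', e2'⟩ := key2 t1' hm'.1 t2' hm'.2
    simp only at heq
    have ha : t1 = t1' := by rw [← e1, ← e1', heq]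
    have hb : t2 = t2' := by rw [← e2, ← e2', heq]
    exact Prod.ext ha hb
  rw [himg, Set.ncard_image_of_injOn hinj, ncard_sprod]
  rfl

end CompSwitch
set_option maxHeartbeats 2000000 in
theorem component_switch_subtrees {V : Type*} [Fintype V] (T : SimpleGraph V)
    [DecidableRel T.Adj] (hT : T.IsTree) (n : ℕ) (hn : 2 ≤ n) (x : ℕ → V)
    (hadj : ∀ i ≤ n, T.Adj (x i) (x (i + 1)))
    (hinj : Set.InjOn x (Set.Icc 0 (n + 1)))
    (hleaf₁ : T.degree (x 0) = 1) (hleaf₂ : T.degree (x (n + 1)) = 1)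
    (C Cle Cge : ℕ → ℕ)
    (hC : ∀ k ∈ Finset.Icc 1 n, C k =
      numSubtreesIn T
        (reachSet (T.deleteEdges {e | ∃ i ≤ n, e = s(x i, x (i + 1))}) (x k)) (x k))
    (hCle0 : Cle 0 = 1)
    (hCle : ∀ k ∈ Finset.Icc 1 n, Cle k =
      numSubtreesIn T (reachSet (T.deleteEdges {s(x k, x (k + 1))}) (x k)) (x k))
    (hCgeTop : Cge (n + 1) = 1)
    (hCge : ∀ k ∈ Finset.Icc 1 n, Cge k =
      numSubtreesIn T (reachSet (T.deleteEdges {s(x (k - 1), x k)}) (x k)) (x k))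
    (k : ℕ) (hk : k ∈ Finset.Icc 1 (n - 1))
    (h₁ : Cle (k - 1) < Cge (k + 2)) (h₂ : C (k + 1) < C k)
    (S : SimpleGraph V)
    (hS : S = T.deleteEdges {s(x (k - 1), x k), s(x (k + 1), x (k + 2))} ⊔
      SimpleGraph.fromEdgeSet {s(x (k - 1), x (k + 1)), s(x k, x (k + 2))}) :
    numSubtrees T < numSubtrees S ∧
      (numSubtrees S : ℤ) - (numSubtrees T : ℤ) =
        ((C k : ℤ) - (C (k + 1) : ℤ)) * ((Cge (k + 2) : ℤ) - (Cle (k - 1) : ℤ)) := by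
  classical
  simp only [Finset.mem_Icc] at hk
  obtain ⟨hk1, hk2⟩ := hk
  obtain ⟨k', rfl⟩ : ∃ k', k = k' + 1 := ⟨k - 1, by omega⟩
  simp only [show k' + 1 - 1 = k' from rfl, show k' + 1 + 1 = k' + 2 from rfl,
    show k' + 1 + 2 = k' + 3 from rfl] at hS h₁ h₂ ⊢
  have hkn : k' + 2 ≤ n := by omega
  have hacyc : T.IsAcyclic := hT.2
  have hconnT : T.Connected := hT.1
  -- index facts
  have hxinj : ∀ i j, i ≤ n + 1 → j ≤ n + 1 → x i = x j → i = j := fun i j hi hj hij =>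
    hinj (Set.mem_Icc.mpr ⟨Nat.zero_le _, hi⟩) (Set.mem_Icc.mpr ⟨Nat.zero_le _, hj⟩) hij
  have hxne : ∀ i j, i ≤ n + 1 → j ≤ n + 1 → i ≠ j → x i ≠ x j :=
    fun i j hi hj hij h => hij (hxinj i j hi hj h)
  have hsymne : ∀ i1 i2 j1 j2, i1 ≤ n + 1 → i2 ≤ n + 1 → j1 ≤ n + 1 → j2 ≤ n + 1 →
      (i1 ≠ j1 ∨ i2 ≠ j2) → (i1 ≠ j2 ∨ i2 ≠ j1) → s(x i1, x i2) ≠ s(x j1, x j2) := by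
    intro i1 i2 j1 j2 h1 h2 h3 h4 hc1 hc2 he
    rw [Sym2.eq_iff] at he
    rcases he with ⟨e1, e2⟩ | ⟨e1, e2⟩
    · rcases hc1 with h | h
      · exact h (hxinj _ _ h1 h3 e1)
      · exact h (hxinj _ _ h2 h4 e2)
    · rcases hc2 with h | h
      · exact h (hxinj _ _ h1 h4 e1)
      · exact h (hxinj _ _ h2 h3 e2)
  have hbridge : ∀ i ≤ n, ¬(T.deleteEdges {s(x i, x (i + 1))}).Reachable (x i) (x (i + 1)) := by
    intro i hi
    have hb := (isAcyclic_iff_forall_adj_isBridge.mp hacyc) (hadj i hi)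
    rw [isBridge_iff] at hb
    exact hb
  have hreach_iff : ∀ (F : Set (Sym2 V)) (u v : V), (T.deleteEdges F).Reachable u v ↔
      ∃ w : T.Walk u v, w.IsPath ∧ ∀ e ∈ w.edges, e ∉ F := fun F u v =>
    CompSwitch.reachable_deleteEdges_iff F u v
  -- the canonical segment path
  have seg : ∀ i j, i ≤ j → j ≤ n + 1 → ∃ w : T.Walk (x i) (x j), w.IsPath ∧
      (∀ e ∈ w.edges, ∃ m, i ≤ m ∧ m < j ∧ e = s(x m, x (m + 1))) ∧
      (∀ m, i ≤ m → m < j → s(x m, x (m + 1)) ∈ w.edges) ∧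
      (∀ z ∈ w.support, ∃ m, i ≤ m ∧ m ≤ j ∧ z = x m) := by
    intro i j hij
    induction j, hij using Nat.le_induction with
    | base =>
      intro _
      refine ⟨Walk.nil, by simp, by simp, by intro m h1 h2; omega, ?_⟩
      intro z hz
      rw [Walk.support_nil] at hz
      simp only [List.mem_singleton] at hz
      exact ⟨i, le_rfl, le_rfl, hz⟩
    | succ j hij ih =>
      intro hj1
      obtain ⟨w, hwp, hwe, hwc, hws⟩ := ih (by omega)
      have hadjj : T.Adj (x j) (x (j + 1)) := hadj j (by omega)
      have hnotin : x (j + 1) ∉ w.support := by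
        intro hmem
        obtain ⟨m, hm1, hm2, hm3⟩ := hws _ hmem
        have := hxinj (j + 1) m (by omega) (by omega) hm3
        omega
      refine ⟨w.concat hadjj, ?_, ?_, ?_, ?_⟩
      · rw [Walk.isPath_def, Walk.support_concat, List.nodup_append]
        refine ⟨hwp.support_nodup, by simp, ?_⟩
        intro z hz b hb hzb
        simp only [List.mem_singleton] at hb
        subst hb
        subst hzb
        exact hnotin hz
      · intro e he
        rw [Walk.edges_concat, List.concat_eq_append] at he
        rcases List.mem_append.mp he with he | he
        · obtain ⟨m, h1, h2, h3⟩ := hwe e he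
          exact ⟨m, h1, by omega, h3⟩
        · rw [List.mem_singleton] at he
          exact ⟨j, by omega, by omega, he⟩
      · intro m h1 h2
        rw [Walk.edges_concat, List.concat_eq_append]
        rcases Nat.lt_or_ge m j with h | h
        · exact List.mem_append.mpr (Or.inl (hwc m h1 h))
        · have hmj : m = j := by omega
          subst hmj
          exact List.mem_append.mpr (Or.inr (List.mem_singleton.mpr rfl))
      · intro z hz
        rw [Walk.support_concat] at hz
        rcases List.mem_append.mp hz with hz | hz
        · obtain ⟨m, h1, h2, h3⟩ := hws z hz
          exact ⟨m, h1, by omega, h3⟩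
        · rw [List.mem_singleton] at hz
          exact ⟨j + 1, by omega, le_rfl, hz⟩
  -- main sets
  set Ep : Set (Sym2 V) := {e | ∃ i ≤ n, e = s(x i, x (i + 1))} with hEp
  have hEpmem : ∀ i, i ≤ n → s(x i, x (i + 1)) ∈ Ep := by
    intro i hi
    rw [hEp]
    exact ⟨i, hi, rfl⟩
  set A : Set V := reachSet (T.deleteEdges {s(x k', x (k' + 1))}) (x k') with hA
  set U : Set V := reachSet (T.deleteEdges Ep) (x (k' + 1)) with hU
  set W : Set V := reachSet (T.deleteEdges Ep) (x (k' + 2)) with hW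
  set D : Set V := reachSet (T.deleteEdges {s(x (k' + 2), x (k' + 3))}) (x (k' + 3)) with hD
  have haA : x k' ∈ A := by rw [hA]; exact Reachable.refl _
  have hbU : x (k' + 1) ∈ U := by rw [hU]; exact Reachable.refl _
  have hcW : x (k' + 2) ∈ W := by rw [hW]; exact Reachable.refl _
  have hdD : x (k' + 3) ∈ D := by rw [hD]; exact Reachable.refl _
  -- path vertices in U and W
  have hpv_main : ∀ j m, j < m → m ≤ n + 1 → ¬(T.deleteEdges Ep).Reachable (x j) (x m) := by
    intro j m hjm hm hr
    obtain ⟨w, hwp, hwe⟩ := (hreach_iff Ep _ _).mp hr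
    obtain ⟨w2, hw2p, -, hw2c, -⟩ := seg j m (by omega) hm
    have heq : w = w2 := CompSwitch.path_eq hacyc hwp hw2p
    exact hwe _ (heq ▸ hw2c j le_rfl hjm) (hEpmem j (by omega))
  have hpathvert : ∀ j m, j ≤ n + 1 → m ≤ n + 1 →
      (T.deleteEdges Ep).Reachable (x j) (x m) → m = j := by
    intro j m hj hm hr
    rcases lt_trichotomy j m with h | h | h
    · exact absurd hr (hpv_main j m h hm)
    · omega
    · exact absurd hr.symm (hpv_main m j h hj)
  -- non-memberships
  have hxA : ∀ m, k' + 1 ≤ m → m ≤ n + 1 → x m ∉ A := by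
    intro m h1 h2 h
    rw [hA] at h
    obtain ⟨w, hwp, hwe⟩ := (hreach_iff _ _ _).mp h
    obtain ⟨w2, hw2p, -, hw2c, -⟩ := seg k' m (by omega) h2
    have heq : w = w2 := CompSwitch.path_eq hacyc hwp hw2p
    exact hwe _ (heq ▸ hw2c k' le_rfl (by omega)) rfl
  have hbA : x (k' + 1) ∉ A := hxA (k' + 1) le_rfl (by omega)
  have hcA : x (k' + 2) ∉ A := hxA (k' + 2) (by omega) (by omega)
  have hdA : x (k' + 3) ∉ A := hxA (k' + 3) (by omega) (by omega)
  have hxD : ∀ m, m ≤ k' + 2 → x m ∉ D := by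
    intro m hm h
    rw [hD] at h
    have h' : (T.deleteEdges {s(x (k' + 2), x (k' + 3))}).Reachable (x m) (x (k' + 3)) :=
      (CompSwitch.mem_reachSet.mp h).symm
    obtain ⟨w, hwp, hwe⟩ := (hreach_iff _ _ _).mp h'
    obtain ⟨w2, hw2p, -, hw2c, -⟩ := seg m (k' + 3) (by omega) (by omega)
    have heq : w = w2 := CompSwitch.path_eq hacyc hwp hw2p
    exact hwe _ (heq ▸ hw2c (k' + 2) (by omega) (by omega)) rfl
  have haD : x k' ∉ D := hxD k' (by omega)
  have hbD : x (k' + 1) ∉ D := hxD (k' + 1) (by omega)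
  have hcDn : x (k' + 2) ∉ D := hxD (k' + 2) le_rfl
  have haU : x k' ∉ U := fun h => by
    rw [hU] at h
    have := hpathvert (k' + 1) k' (by omega) (by omega) h; omega
  have hcU : x (k' + 2) ∉ U := fun h => by
    rw [hU] at h
    have := hpathvert (k' + 1) (k' + 2) (by omega) (by omega) h; omega
  have hdU : x (k' + 3) ∉ U := fun h => by
    rw [hU] at h
    have := hpathvert (k' + 1) (k' + 3) (by omega) (by omega) h; omega
  have haW : x k' ∉ W := fun h => by
    rw [hW] at h
    have := hpathvert (k' + 2) k' (by omega) (by omega) h; omega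
  have hbW : x (k' + 1) ∉ W := fun h => by
    rw [hW] at h
    have := hpathvert (k' + 2) (k' + 1) (by omega) (by omega) h; omega
  have hdW : x (k' + 3) ∉ W := fun h => by
    rw [hW] at h
    have := hpathvert (k' + 2) (k' + 3) (by omega) (by omega) h; omega
  -- monotonicity of reachability under fewer deleted edges
  have hmono : ∀ (F F' : Set (Sym2 V)), F ⊆ F' → ∀ u v,
      (T.deleteEdges F').Reachable u v → (T.deleteEdges F).Reachable u v := by
    intro F F' hFF u v h
    refine h.mono ?_
    intro a b hab
    rw [deleteEdges_adj] at hab ⊢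
    exact ⟨hab.1, fun hc => hab.2 (hFF hc)⟩
  -- disjointness
  have hAU : ∀ z, z ∈ A → z ∈ U → False := by
    intro z hzA hzU
    rw [hA] at hzA
    rw [hU] at hzU
    have h2 : (T.deleteEdges {s(x k', x (k' + 1))}).Reachable (x (k' + 1)) z :=
      hmono _ Ep (by
        intro e he
        simp only [Set.mem_singleton_iff] at he
        subst he
        exact hEpmem k' (by omega)) _ _ hzU
    exact hbridge k' (by omega) (Reachable.trans hzA h2.symm)
  have hAW : ∀ z, z ∈ A → z ∈ W → False := by
    intro z hzA hzW
    rw [hA] at hzA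
    rw [hW] at hzW
    have h2 : (T.deleteEdges {s(x k', x (k' + 1))}).Reachable (x (k' + 2)) z :=
      hmono _ Ep (by
        intro e he
        simp only [Set.mem_singleton_iff] at he
        subst he
        exact hEpmem k' (by omega)) _ _ hzW
    have hbc : (T.deleteEdges {s(x k', x (k' + 1))}).Adj (x (k' + 1)) (x (k' + 2)) := by
      rw [deleteEdges_adj]
      refine ⟨hadj (k' + 1) (by omega), ?_⟩
      simp only [Set.mem_singleton_iff]
      exact hsymne (k' + 1) (k' + 2) k' (k' + 1) (by omega) (by omega) (by omega) (by omega)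
        (Or.inl (by omega)) (Or.inr (by omega))
    exact hbridge k' (by omega) (Reachable.trans hzA (h2.symm.trans hbc.reachable.symm))
  have hAc' : ∀ z ∈ A, (T.deleteEdges {s(x (k' + 2), x (k' + 3))}).Reachable (x k') z := by
    intro z hz
    rw [hA] at hz
    obtain ⟨w, hwp, hwe⟩ := (hreach_iff _ _ _).mp hz
    refine (hreach_iff _ _ _).mpr ⟨w, hwp, ?_⟩
    intro e he hee
    simp only [Set.mem_singleton_iff] at hee
    subst hee
    have hcsup : x (k' + 2) ∈ w.support := w.fst_mem_support_of_mem_edges he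
    have hw1 : (w.takeUntil _ hcsup).IsPath := hwp.takeUntil _
    obtain ⟨w2, hw2p, -, hw2c, -⟩ := seg k' (k' + 2) (by omega) (by omega)
    have heq : w.takeUntil _ hcsup = w2 := CompSwitch.path_eq hacyc hw1 hw2p
    have hmm : s(x k', x (k' + 1)) ∈ (w.takeUntil _ hcsup).edges :=
      heq ▸ hw2c k' le_rfl (by omega)
    exact hwe _ (w.edges_takeUntil_subset hcsup hmm) rfl
  have hca : (T.deleteEdges {s(x (k' + 2), x (k' + 3))}).Reachable (x (k' + 2)) (x k') := by
    have e1 : (T.deleteEdges {s(x (k' + 2), x (k' + 3))}).Adj (x (k' + 2)) (x (k' + 1)) := by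
      rw [deleteEdges_adj]
      refine ⟨(hadj (k' + 1) (by omega)).symm, ?_⟩
      simp only [Set.mem_singleton_iff]
      exact hsymne (k' + 2) (k' + 1) (k' + 2) (k' + 3) (by omega) (by omega) (by omega)
        (by omega) (Or.inr (by omega)) (Or.inl (by omega))
    have e2 : (T.deleteEdges {s(x (k' + 2), x (k' + 3))}).Adj (x (k' + 1)) (x k') := by
      rw [deleteEdges_adj]
      refine ⟨(hadj k' (by omega)).symm, ?_⟩
      simp only [Set.mem_singleton_iff]
      exact hsymne (k' + 1) k' (k' + 2) (k' + 3) (by omega) (by omega) (by omega)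
        (by omega) (Or.inl (by omega)) (Or.inl (by omega))
    exact e1.reachable.trans e2.reachable
  have hAD : ∀ z, z ∈ A → z ∈ D → False := by
    intro z hzA hzD
    rw [hD] at hzD
    exact hbridge (k' + 2) (by omega) (((hca.trans (hAc' z hzA)).trans hzD.symm))
  have hUW : ∀ z, z ∈ U → z ∈ W → False := by
    intro z hzU hzW
    rw [hU] at hzU
    rw [hW] at hzW
    have h1 : (T.deleteEdges {s(x (k' + 1), x (k' + 2))}).Reachable (x (k' + 1)) z :=
      hmono _ Ep (by
        intro e he
        simp only [Set.mem_singleton_iff] at he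
        subst he
        exact hEpmem (k' + 1) (by omega)) _ _ hzU
    have h2 : (T.deleteEdges {s(x (k' + 1), x (k' + 2))}).Reachable (x (k' + 2)) z :=
      hmono _ Ep (by
        intro e he
        simp only [Set.mem_singleton_iff] at he
        subst he
        exact hEpmem (k' + 1) (by omega)) _ _ hzW
    exact hbridge (k' + 1) (by omega) (h1.trans h2.symm)
  have hbc' : (T.deleteEdges {s(x (k' + 2), x (k' + 3))}).Adj (x (k' + 2)) (x (k' + 1)) := by
    rw [deleteEdges_adj]
    refine ⟨(hadj (k' + 1) (by omega)).symm, ?_⟩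
    simp only [Set.mem_singleton_iff]
    exact hsymne (k' + 2) (k' + 1) (k' + 2) (k' + 3) (by omega) (by omega) (by omega)
      (by omega) (Or.inr (by omega)) (Or.inl (by omega))
  have hUD : ∀ z, z ∈ U → z ∈ D → False := by
    intro z hzU hzD
    rw [hU] at hzU
    rw [hD] at hzD
    have h1 : (T.deleteEdges {s(x (k' + 2), x (k' + 3))}).Reachable (x (k' + 1)) z :=
      hmono _ Ep (by
        intro e he
        simp only [Set.mem_singleton_iff] at he
        subst he
        exact hEpmem (k' + 2) (by omega)) _ _ hzU
    exact hbridge (k' + 2) (by omega) ((hbc'.reachable.trans h1).trans hzD.symm)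
  have hWD : ∀ z, z ∈ W → z ∈ D → False := by
    intro z hzW hzD
    rw [hW] at hzW
    rw [hD] at hzD
    have h1 : (T.deleteEdges {s(x (k' + 2), x (k' + 3))}).Reachable (x (k' + 2)) z :=
      hmono _ Ep (by
        intro e he
        simp only [Set.mem_singleton_iff] at he
        subst he
        exact hEpmem (k' + 2) (by omega)) _ _ hzW
    exact hbridge (k' + 2) (by omega) (h1.trans hzD.symm)
  -- crossings in T
  have hcrossA : ∀ u v, T.Adj u v → u ∈ A → v ∉ A → u = x k' ∧ v = x (k' + 1) := by
    intro u v huv hu hv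
    have hedge : s(u, v) = s(x k', x (k' + 1)) := by
      by_contra hne
      apply hv
      rw [hA] at hu ⊢
      refine Reachable.trans hu (Adj.reachable ?_)
      rw [deleteEdges_adj]
      exact ⟨huv, by simpa using hne⟩
    rw [Sym2.eq_iff] at hedge
    rcases hedge with ⟨e1, e2⟩ | ⟨e1, e2⟩
    · exact ⟨e1, e2⟩
    · exfalso; rw [e1] at hu; exact hbA hu
  have hcrossU : ∀ u v, T.Adj u v → u ∈ U → v ∉ U →
      u = x (k' + 1) ∧ (v = x k' ∨ v = x (k' + 2)) := by
    intro u v huv hu hv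
    have hedge : s(u, v) ∈ Ep := by
      by_contra hne
      apply hv
      rw [hU] at hu ⊢
      refine Reachable.trans hu (Adj.reachable ?_)
      rw [deleteEdges_adj]
      exact ⟨huv, hne⟩
    rw [hEp] at hedge
    obtain ⟨i, hi, he⟩ := hedge
    rw [Sym2.eq_iff] at he
    rcases he with ⟨e1, e2⟩ | ⟨e1, e2⟩
    · have hik : i = k' + 1 := by
        rw [e1] at hu
        rw [hU] at hu
        exact hpathvert (k' + 1) i (by omega) (by omega) hu
      subst hik
      exact ⟨e1, Or.inr e2⟩
    · have hik : i + 1 = k' + 1 := by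
        rw [e1] at hu
        rw [hU] at hu
        exact hpathvert (k' + 1) (i + 1) (by omega) (by omega) hu
      have hik' : i = k' := by omega
      subst hik'
      exact ⟨e1, Or.inl e2⟩
  have hcrossW : ∀ u v, T.Adj u v → u ∈ W → v ∉ W →
      u = x (k' + 2) ∧ (v = x (k' + 1) ∨ v = x (k' + 3)) := by
    intro u v huv hu hv
    have hedge : s(u, v) ∈ Ep := by
      by_contra hne
      apply hv
      rw [hW] at hu ⊢
      refine Reachable.trans hu (Adj.reachable ?_)
      rw [deleteEdges_adj]
      exact ⟨huv, hne⟩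
    rw [hEp] at hedge
    obtain ⟨i, hi, he⟩ := hedge
    rw [Sym2.eq_iff] at he
    rcases he with ⟨e1, e2⟩ | ⟨e1, e2⟩
    · have hik : i = k' + 2 := by
        rw [e1] at hu
        rw [hW] at hu
        exact hpathvert (k' + 2) i (by omega) (by omega) hu
      subst hik
      exact ⟨e1, Or.inr e2⟩
    · have hik : i + 1 = k' + 2 := by
        rw [e1] at hu
        rw [hW] at hu
        exact hpathvert (k' + 2) (i + 1) (by omega) (by omega) hu
      have hik' : i = k' + 1 := by omega
      subst hik'
      exact ⟨e1, Or.inl e2⟩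
  have hcrossD : ∀ u v, T.Adj u v → u ∈ D → v ∉ D → u = x (k' + 3) ∧ v = x (k' + 2) := by
    intro u v huv hu hv
    have hedge : s(u, v) = s(x (k' + 2), x (k' + 3)) := by
      by_contra hne
      apply hv
      rw [hD] at hu ⊢
      refine Reachable.trans hu (Adj.reachable ?_)
      rw [deleteEdges_adj]
      exact ⟨huv, by simpa using hne⟩
    rw [Sym2.eq_iff] at hedge
    rcases hedge with ⟨e1, e2⟩ | ⟨e1, e2⟩
    · exfalso; rw [e1] at hu; exact hcDn hu
    · exact ⟨e1, e2⟩
  -- cover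
  have hcover : ∀ y, y ∈ A ∨ y ∈ U ∨ y ∈ W ∨ y ∈ D := by
    intro y
    have hcl : ∀ u v, T.Adj u v → (u ∈ A ∨ u ∈ U ∨ u ∈ W ∨ u ∈ D) →
        (v ∈ A ∨ v ∈ U ∨ v ∈ W ∨ v ∈ D) := by
      intro u v huv hu
      by_contra hv
      push_neg at hv
      obtain ⟨hv1, hv2, hv3, hv4⟩ := hv
      rcases hu with h | h | h | h
      · obtain ⟨-, he⟩ := hcrossA u v huv h hv1
        exact hv2 (he ▸ hbU)
      · obtain ⟨-, he⟩ := hcrossU u v huv h hv2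
        rcases he with he | he
        · exact hv1 (he ▸ haA)
        · exact hv3 (he ▸ hcW)
      · obtain ⟨-, he⟩ := hcrossW u v huv h hv3
        rcases he with he | he
        · exact hv2 (he ▸ hbU)
        · exact hv4 (he ▸ hdD)
      · obtain ⟨-, he⟩ := hcrossD u v huv h hv4
        exact hv3 (he ▸ hcW)
    exact CompSwitch.reach_closed hcl (hconnT.preconnected (x k') y) (Or.inl haA)
  -- S adjacency
  have hSadj : ∀ u v, S.Adj u v ↔
      (T.Adj u v ∧ s(u, v) ≠ s(x k', x (k' + 1)) ∧ s(u, v) ≠ s(x (k' + 2), x (k' + 3))) ∨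
      ((s(u, v) = s(x k', x (k' + 2)) ∨ s(u, v) = s(x (k' + 1), x (k' + 3))) ∧ u ≠ v) := by
    intro u v
    rw [hS]
    simp only [sup_adj, deleteEdges_adj, fromEdgeSet_adj, Set.mem_insert_iff,
      Set.mem_singleton_iff, not_or]
  have hSac : S.Adj (x k') (x (k' + 2)) := by
    rw [hSadj]
    exact Or.inr ⟨Or.inl rfl, hxne k' (k' + 2) (by omega) (by omega) (by omega)⟩
  have hSbd : S.Adj (x (k' + 1)) (x (k' + 3)) := by
    rw [hSadj]
    exact Or.inr ⟨Or.inr rfl, hxne (k' + 1) (k' + 3) (by omega) (by omega) (by omega)⟩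
  have hSbc : S.Adj (x (k' + 1)) (x (k' + 2)) := by
    rw [hSadj]
    refine Or.inl ⟨hadj (k' + 1) (by omega), ?_, ?_⟩
    · exact hsymne (k' + 1) (k' + 2) k' (k' + 1) (by omega) (by omega) (by omega) (by omega)
        (Or.inl (by omega)) (Or.inr (by omega))
    · exact hsymne (k' + 1) (k' + 2) (k' + 2) (k' + 3) (by omega) (by omega) (by omega)
        (by omega) (Or.inl (by omega)) (Or.inl (by omega))
  -- S crossings
  have hScrossA : ∀ u v, S.Adj u v → u ∈ A → v ∉ A → u = x k' ∧ v = x (k' + 2) := by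
    intro u v huv hu hv
    rw [hSadj] at huv
    rcases huv with ⟨ht, hne1, -⟩ | ⟨he, -⟩
    · obtain ⟨e1, e2⟩ := hcrossA u v ht hu hv
      exact absurd (by rw [e1, e2]) hne1
    · rcases he with he | he <;> rw [Sym2.eq_iff] at he
      · rcases he with ⟨e1, e2⟩ | ⟨e1, e2⟩
        · exact ⟨e1, e2⟩
        · exfalso; rw [e1] at hu; exact hcA hu
      · rcases he with ⟨e1, e2⟩ | ⟨e1, e2⟩
        · exfalso; rw [e1] at hu; exact hbA hu
        · exfalso; rw [e1] at hu; exact hdA hu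
  have hScrossU : ∀ u v, S.Adj u v → u ∈ U → v ∉ U →
      u = x (k' + 1) ∧ (v = x (k' + 2) ∨ v = x (k' + 3)) := by
    intro u v huv hu hv
    rw [hSadj] at huv
    rcases huv with ⟨ht, hne1, -⟩ | ⟨he, -⟩
    · obtain ⟨e1, e2⟩ := hcrossU u v ht hu hv
      rcases e2 with e2 | e2
      · exact absurd (by rw [e1, e2]; exact Sym2.eq_swap) hne1
      · exact ⟨e1, Or.inl e2⟩
    · rcases he with he | he <;> rw [Sym2.eq_iff] at he
      · rcases he with ⟨e1, e2⟩ | ⟨e1, e2⟩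
        · exfalso; rw [e1] at hu; exact haU hu
        · exfalso; rw [e1] at hu; exact hcU hu
      · rcases he with ⟨e1, e2⟩ | ⟨e1, e2⟩
        · exact ⟨e1, Or.inr e2⟩
        · exfalso; rw [e1] at hu; exact hdU hu
  have hScrossW : ∀ u v, S.Adj u v → u ∈ W → v ∉ W →
      u = x (k' + 2) ∧ (v = x (k' + 1) ∨ v = x k') := by
    intro u v huv hu hv
    rw [hSadj] at huv
    rcases huv with ⟨ht, -, hne2⟩ | ⟨he, -⟩
    · obtain ⟨e1, e2⟩ := hcrossW u v ht hu hv
      rcases e2 with e2 | e2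
      · exact ⟨e1, Or.inl e2⟩
      · exact absurd (by rw [e1, e2]) hne2
    · rcases he with he | he <;> rw [Sym2.eq_iff] at he
      · rcases he with ⟨e1, e2⟩ | ⟨e1, e2⟩
        · exfalso; rw [e1] at hu; exact haW hu
        · exact ⟨e1, Or.inr e2⟩
      · rcases he with ⟨e1, e2⟩ | ⟨e1, e2⟩
        · exfalso; rw [e1] at hu; exact hbW hu
        · exfalso; rw [e1] at hu; exact hdW hu
  have hScrossD : ∀ u v, S.Adj u v → u ∈ D → v ∉ D → u = x (k' + 3) ∧ v = x (k' + 1) := by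
    intro u v huv hu hv
    rw [hSadj] at huv
    rcases huv with ⟨ht, -, hne2⟩ | ⟨he, -⟩
    · obtain ⟨e1, e2⟩ := hcrossD u v ht hu hv
      exact absurd (by rw [e1, e2]; exact Sym2.eq_swap) hne2
    · rcases he with he | he <;> rw [Sym2.eq_iff] at he
      · rcases he with ⟨e1, e2⟩ | ⟨e1, e2⟩
        · exfalso; rw [e1] at hu; exact haD hu
        · exfalso; rw [e1] at hu; exact hcDn hu
      · rcases he with ⟨e1, e2⟩ | ⟨e1, e2⟩
        · exfalso; rw [e1] at hu; exact hbD hu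
        · exact ⟨e1, e2⟩
  -- agreement of S and T inside the pieces
  have hagree_of : ∀ (Z : Set V),
      (x k' ∉ Z ∨ x (k' + 1) ∉ Z) →
      (x (k' + 2) ∉ Z ∨ x (k' + 3) ∉ Z) →
      (x k' ∉ Z ∨ x (k' + 2) ∉ Z) →
      (x (k' + 1) ∉ Z ∨ x (k' + 3) ∉ Z) →
      ∀ u v, u ∈ Z → v ∈ Z → (S.Adj u v ↔ T.Adj u v) := by
    intro Z h1 h2 h3 h4 u v hu hv
    have hgen : ∀ (p q : V), (p ∉ Z ∨ q ∉ Z) → s(u, v) ≠ s(p, q) := by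
      intro p q hpq he
      rw [Sym2.eq_iff] at he
      rcases he with ⟨e1, e2⟩ | ⟨e1, e2⟩ <;> rcases hpq with h | h
      · rw [e1] at hu; exact h hu
      · rw [e2] at hv; exact h hv
      · rw [e2] at hv; exact h hv
      · rw [e1] at hu; exact h hu
    rw [hSadj]
    constructor
    · rintro (⟨ht, -, -⟩ | ⟨he | he, -⟩)
      · exact ht
      · exact absurd he (hgen _ _ h3)
      · exact absurd he (hgen _ _ h4)
    · intro ht
      exact Or.inl ⟨ht, hgen _ _ h1, hgen _ _ h2⟩
  have hagreeA := hagree_of A (Or.inr hbA) (Or.inl hcA) (Or.inr hcA) (Or.inl hbA)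
  have hagreeU := hagree_of U (Or.inl haU) (Or.inl hcU) (Or.inl haU) (Or.inr hdU)
  have hagreeW := hagree_of W (Or.inl haW) (Or.inr hdW) (Or.inl haW) (Or.inl hbW)
  have hagreeD := hagree_of D (Or.inl haD) (Or.inl hcDn) (Or.inl haD) (Or.inl hbD)
  -- the four families
  set F1 := {s : Set V | (s.Nonempty ∧ (T.induce s).Connected) ∧
    x k' ∈ s ∧ x (k' + 1) ∈ s ∧ x (k' + 2) ∉ s} with hF1
  set F2 := {s : Set V | (s.Nonempty ∧ (T.induce s).Connected) ∧
    x (k' + 2) ∈ s ∧ x (k' + 3) ∈ s ∧ x (k' + 1) ∉ s} with hF2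
  set G1 := {s : Set V | (s.Nonempty ∧ (S.induce s).Connected) ∧
    x k' ∈ s ∧ x (k' + 2) ∈ s ∧ x (k' + 1) ∉ s} with hG1
  set G2 := {s : Set V | (s.Nonempty ∧ (S.induce s).Connected) ∧
    x (k' + 1) ∈ s ∧ x (k' + 3) ∈ s ∧ x (k' + 2) ∉ s} with hG2
  set SubT := {s : Set V | s.Nonempty ∧ (T.induce s).Connected} with hSubT
  set SubS := {s : Set V | s.Nonempty ∧ (S.induce s).Connected} with hSubS
  have hdiffT : SubT \ SubS = F1 ∪ F2 := by
    ext s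
    simp only [hSubT, hSubS, hF1, hF2, Set.mem_diff, Set.mem_union, Set.mem_setOf_eq]
    constructor
    · rintro ⟨⟨hne, hconn⟩, hns⟩
      by_cases hx1 : x k' ∈ s ∧ x (k' + 1) ∈ s ∧ x (k' + 2) ∉ s
      · exact Or.inl ⟨⟨hne, hconn⟩, hx1⟩
      by_cases hx2 : x (k' + 2) ∈ s ∧ x (k' + 3) ∈ s ∧ x (k' + 1) ∉ s
      · exact Or.inr ⟨⟨hne, hconn⟩, hx2⟩
      exfalso
      apply hns
      refine ⟨hne, ?_⟩
      have hrep : ∀ u v, u ∈ s → v ∈ s → T.Adj u v →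
          ∃ w : S.Walk u v, ∀ z ∈ w.support, z ∈ s := by
        intro u v hu hv huv
        by_cases he1 : s(u, v) = s(x k', x (k' + 1))
        · rw [Sym2.eq_iff] at he1
          have hcs : x (k' + 2) ∈ s := by
            by_contra hc
            rcases he1 with ⟨e1, e2⟩ | ⟨e1, e2⟩
            · rw [e1] at hu; rw [e2] at hv; exact hx1 ⟨hu, hv, hc⟩
            · rw [e1] at hu; rw [e2] at hv; exact hx1 ⟨hv, hu, hc⟩
          rcases he1 with ⟨e1, e2⟩ | ⟨e1, e2⟩
          · subst e1; subst e2
            refine ⟨Walk.cons hSac (Walk.cons hSbc.symm Walk.nil), ?_⟩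
            intro z hz
            simp only [Walk.support_cons, Walk.support_nil, List.mem_cons,
              List.mem_singleton, List.not_mem_nil, or_false] at hz
            rcases hz with rfl | rfl | rfl
            exacts [hu, hcs, hv]
          · subst e1; subst e2
            refine ⟨Walk.cons hSbc (Walk.cons hSac.symm Walk.nil), ?_⟩
            intro z hz
            simp only [Walk.support_cons, Walk.support_nil, List.mem_cons,
              List.mem_singleton, List.not_mem_nil, or_false] at hz
            rcases hz with rfl | rfl | rfl
            exacts [hu, hcs, hv]
        by_cases he2 : s(u, v) = s(x (k' + 2), x (k' + 3))
        · rw [Sym2.eq_iff] at he2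
          have hbs : x (k' + 1) ∈ s := by
            by_contra hc
            rcases he2 with ⟨e1, e2⟩ | ⟨e1, e2⟩
            · rw [e1] at hu; rw [e2] at hv; exact hx2 ⟨hu, hv, hc⟩
            · rw [e1] at hu; rw [e2] at hv; exact hx2 ⟨hv, hu, hc⟩
          rcases he2 with ⟨e1, e2⟩ | ⟨e1, e2⟩
          · subst e1; subst e2
            refine ⟨Walk.cons hSbc.symm (Walk.cons hSbd Walk.nil), ?_⟩
            intro z hz
            simp only [Walk.support_cons, Walk.support_nil, List.mem_cons,
              List.mem_singleton, List.not_mem_nil, or_false] at hz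
            rcases hz with rfl | rfl | rfl
            exacts [hu, hbs, hv]
          · subst e1; subst e2
            refine ⟨Walk.cons hSbd.symm (Walk.cons hSbc Walk.nil), ?_⟩
            intro z hz
            simp only [Walk.support_cons, Walk.support_nil, List.mem_cons,
              List.mem_singleton, List.not_mem_nil, or_false] at hz
            rcases hz with rfl | rfl | rfl
            exacts [hu, hbs, hv]
        · refine ⟨Walk.cons ((hSadj u v).mpr (Or.inl ⟨huv, he1, he2⟩)) Walk.nil, ?_⟩
          intro z hz
          simp only [Walk.support_cons, Walk.support_nil, List.mem_cons,
            List.mem_singleton, List.not_mem_nil, or_false] at hz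
          rcases hz with rfl | rfl
          exacts [hu, hv]
      obtain ⟨z0, hz0⟩ := hne
      have hgood := (CompSwitch.induce_connected_iff_good hz0).mp hconn
      refine (CompSwitch.induce_connected_iff_good (G := S) hz0).mpr ?_
      intro y hy
      obtain ⟨w, hw⟩ := hgood y hy
      exact CompSwitch.good_transfer hrep w hw
    · rintro (⟨⟨hne, hconn⟩, ha1, hb1, hc1⟩ | ⟨⟨hne, hconn⟩, hc1, hd1, hb1⟩)
      · refine ⟨⟨hne, hconn⟩, ?_⟩
        rintro ⟨-, hSconn⟩
        obtain ⟨w, hw⟩ := (CompSwitch.induce_connected_iff_good ha1).mp hSconn _ hb1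
        obtain ⟨u', v', hadj', hu', hv', hus, hvs⟩ := CompSwitch.exists_crossing w haA
          (fun hc => hAU _ hc hbU)
        obtain ⟨-, he⟩ := hScrossA u' v' hadj' hu' hv'
        rw [he] at hvs
        exact hc1 (hw _ hvs)
      · refine ⟨⟨hne, hconn⟩, ?_⟩
        rintro ⟨-, hSconn⟩
        obtain ⟨w, hw⟩ := (CompSwitch.induce_connected_iff_good hc1).mp hSconn _ hd1
        obtain ⟨u', v', hadj', hu', hv', hus, hvs⟩ := CompSwitch.exists_crossing w.reverse hdD
          (fun hc => hWD _ hcW hc)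
        obtain ⟨-, he⟩ := hScrossD u' v' hadj' hu' hv'
        rw [Walk.support_reverse] at hvs
        rw [he] at hvs
        exact hb1 (hw _ (List.mem_reverse.mp hvs))
  have hdiffS : SubS \ SubT = G1 ∪ G2 := by
    ext s
    simp only [hSubT, hSubS, hG1, hG2, Set.mem_diff, Set.mem_union, Set.mem_setOf_eq]
    constructor
    · rintro ⟨⟨hne, hconn⟩, hns⟩
      by_cases hx1 : x k' ∈ s ∧ x (k' + 2) ∈ s ∧ x (k' + 1) ∉ s
      · exact Or.inl ⟨⟨hne, hconn⟩, hx1⟩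
      by_cases hx2 : x (k' + 1) ∈ s ∧ x (k' + 3) ∈ s ∧ x (k' + 2) ∉ s
      · exact Or.inr ⟨⟨hne, hconn⟩, hx2⟩
      exfalso
      apply hns
      refine ⟨hne, ?_⟩
      have hrep : ∀ u v, u ∈ s → v ∈ s → S.Adj u v →
          ∃ w : T.Walk u v, ∀ z ∈ w.support, z ∈ s := by
        intro u v hu hv huv
        by_cases he1 : s(u, v) = s(x k', x (k' + 2))
        · rw [Sym2.eq_iff] at he1
          have hbs : x (k' + 1) ∈ s := by
            by_contra hc
            rcases he1 with ⟨e1, e2⟩ | ⟨e1, e2⟩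
            · rw [e1] at hu; rw [e2] at hv; exact hx1 ⟨hu, hv, hc⟩
            · rw [e1] at hu; rw [e2] at hv; exact hx1 ⟨hv, hu, hc⟩
          rcases he1 with ⟨e1, e2⟩ | ⟨e1, e2⟩
          · subst e1; subst e2
            refine ⟨Walk.cons (hadj k' (by omega)) (Walk.cons (hadj (k' + 1) (by omega))
              Walk.nil), ?_⟩
            intro z hz
            simp only [Walk.support_cons, Walk.support_nil, List.mem_cons,
              List.mem_singleton, List.not_mem_nil, or_false] at hz
            rcases hz with rfl | rfl | rfl
            exacts [hu, hbs, hv]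
          · subst e1; subst e2
            refine ⟨Walk.cons (hadj (k' + 1) (by omega)).symm
              (Walk.cons (hadj k' (by omega)).symm Walk.nil), ?_⟩
            intro z hz
            simp only [Walk.support_cons, Walk.support_nil, List.mem_cons,
              List.mem_singleton, List.not_mem_nil, or_false] at hz
            rcases hz with rfl | rfl | rfl
            exacts [hu, hbs, hv]
        by_cases he2 : s(u, v) = s(x (k' + 1), x (k' + 3))
        · rw [Sym2.eq_iff] at he2
          have hcs : x (k' + 2) ∈ s := by
            by_contra hc
            rcases he2 with ⟨e1, e2⟩ | ⟨e1, e2⟩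
            · rw [e1] at hu; rw [e2] at hv; exact hx2 ⟨hu, hv, hc⟩
            · rw [e1] at hu; rw [e2] at hv; exact hx2 ⟨hv, hu, hc⟩
          rcases he2 with ⟨e1, e2⟩ | ⟨e1, e2⟩
          · subst e1; subst e2
            refine ⟨Walk.cons (hadj (k' + 1) (by omega)) (Walk.cons (hadj (k' + 2) (by omega))
              Walk.nil), ?_⟩
            intro z hz
            simp only [Walk.support_cons, Walk.support_nil, List.mem_cons,
              List.mem_singleton, List.not_mem_nil, or_false] at hz
            rcases hz with rfl | rfl | rfl
            exacts [hu, hcs, hv]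
          · subst e1; subst e2
            refine ⟨Walk.cons (hadj (k' + 2) (by omega)).symm
              (Walk.cons (hadj (k' + 1) (by omega)).symm Walk.nil), ?_⟩
            intro z hz
            simp only [Walk.support_cons, Walk.support_nil, List.mem_cons,
              List.mem_singleton, List.not_mem_nil, or_false] at hz
            rcases hz with rfl | rfl | rfl
            exacts [hu, hcs, hv]
        · have ht : T.Adj u v := by
            rcases (hSadj u v).mp huv with ⟨ht, -, -⟩ | ⟨he, -⟩
            · exact ht
            · rcases he with he | he
              · exact absurd he he1
              · exact absurd he he2
          refine ⟨Walk.cons ht Walk.nil, ?_⟩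
          intro z hz
          simp only [Walk.support_cons, Walk.support_nil, List.mem_cons,
            List.mem_singleton, List.not_mem_nil, or_false] at hz
          rcases hz with rfl | rfl
          exacts [hu, hv]
      obtain ⟨z0, hz0⟩ := hne
      have hgood := (CompSwitch.induce_connected_iff_good hz0).mp hconn
      refine (CompSwitch.induce_connected_iff_good (G := T) hz0).mpr ?_
      intro y hy
      obtain ⟨w, hw⟩ := hgood y hy
      exact CompSwitch.good_transfer hrep w hw
    · rintro (⟨⟨hne, hconn⟩, ha1, hc1, hb1⟩ | ⟨⟨hne, hconn⟩, hb1, hd1, hc1⟩)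
      · refine ⟨⟨hne, hconn⟩, ?_⟩
        rintro ⟨-, hTconn⟩
        obtain ⟨w, hw⟩ := (CompSwitch.induce_connected_iff_good ha1).mp hTconn _ hc1
        obtain ⟨u', v', hadj', hu', hv', hus, hvs⟩ := CompSwitch.exists_crossing w haA
          (fun hc => hAW _ hc hcW)
        obtain ⟨-, he⟩ := hcrossA u' v' hadj' hu' hv'
        rw [he] at hvs
        exact hb1 (hw _ hvs)
      · refine ⟨⟨hne, hconn⟩, ?_⟩
        rintro ⟨-, hTconn⟩
        obtain ⟨w, hw⟩ := (CompSwitch.induce_connected_iff_good hb1).mp hTconn _ hd1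
        obtain ⟨u', v', hadj', hu', hv', hus, hvs⟩ := CompSwitch.exists_crossing w.reverse hdD
          (fun hc => hUD _ hbU hc)
        obtain ⟨-, he⟩ := hcrossD u' v' hadj' hu' hv'
        rw [Walk.support_reverse] at hvs
        rw [he] at hvs
        exact hc1 (hw _ (List.mem_reverse.mp hvs))
  -- cardinalities of the families
  have hsep1 : ∀ u v, T.Adj u v → u ∉ A → u ∉ U → (v ∈ A ∨ v ∈ U) → u = x (k' + 2) := by
    intro u v h huA huU hv
    rcases hcover u with hc | hc | hc | hc
    · exact absurd hc huA
    · exact absurd hc huU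
    · exact (hcrossW u v h hc (fun hvW =>
        hv.elim (fun h' => hAW v h' hvW) (fun h' => hUW v h' hvW))).1
    · exfalso
      obtain ⟨-, he⟩ := hcrossD u v h hc (fun hvD =>
        hv.elim (fun h' => hAD v h' hvD) (fun h' => hUD v h' hvD))
      rcases hv with h' | h'
      · rw [he] at h'; exact hcA h'
      · rw [he] at h'; exact hcU h'
  have hcardF1 : F1.ncard = numSubtreesIn T A (x k') * numSubtreesIn T U (x (k' + 1)) := by
    rw [hF1]
    exact CompSwitch.fam_card T A U (x k') (x (k' + 1)) (x (k' + 2)) haA hbU hAU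
      (hadj k' (by omega)) hcA hcU
      (fun u v h h1 h2 => (hcrossA u v h h1 h2).1)
      (fun u v h h1 h2 => (hcrossU u v h h1 h2).1)
      hsep1
  have hsep2 : ∀ u v, T.Adj u v → u ∉ W → u ∉ D → (v ∈ W ∨ v ∈ D) → u = x (k' + 1) := by
    intro u v h huW huD hv
    rcases hcover u with hc | hc | hc | hc
    · exfalso
      obtain ⟨-, he⟩ := hcrossA u v h hc (fun hvA =>
        hv.elim (fun h' => hAW v hvA h') (fun h' => hAD v hvA h'))
      rcases hv with h' | h'
      · rw [he] at h'; exact hbW h'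
      · rw [he] at h'; exact hbD h'
    · exact (hcrossU u v h hc (fun hvU =>
        hv.elim (fun h' => hUW v hvU h') (fun h' => hUD v hvU h'))).1
    · exact absurd hc huW
    · exact absurd hc huD
  have hcardF2 : F2.ncard =
      numSubtreesIn T W (x (k' + 2)) * numSubtreesIn T D (x (k' + 3)) := by
    rw [hF2]
    exact CompSwitch.fam_card T W D (x (k' + 2)) (x (k' + 3)) (x (k' + 1)) hcW hdD hWD
      (hadj (k' + 2) (by omega)) hbW hbD
      (fun u v h h1 h2 => (hcrossW u v h h1 h2).1)
      (fun u v h h1 h2 => (hcrossD u v h h1 h2).1)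
      hsep2
  have hsepG1 : ∀ u v, S.Adj u v → u ∉ A → u ∉ W → (v ∈ A ∨ v ∈ W) → u = x (k' + 1) := by
    intro u v h huA huW hv
    rcases hcover u with hc | hc | hc | hc
    · exact absurd hc huA
    · exact (hScrossU u v h hc (fun hvU =>
        hv.elim (fun h' => hAU v h' hvU) (fun h' => hUW v hvU h'))).1
    · exact absurd hc huW
    · exfalso
      obtain ⟨-, he⟩ := hScrossD u v h hc (fun hvD =>
        hv.elim (fun h' => hAD v h' hvD) (fun h' => hWD v h' hvD))
      rcases hv with h' | h'
      · rw [he] at h'; exact hbA h'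
      · rw [he] at h'; exact hbW h'
  have hcardG1 : G1.ncard = numSubtreesIn T A (x k') * numSubtreesIn T W (x (k' + 2)) := by
    rw [hG1]
    rw [CompSwitch.fam_card S A W (x k') (x (k' + 2)) (x (k' + 1)) haA hcW hAW hSac hbA hbW
      (fun u v h h1 h2 => (hScrossA u v h h1 h2).1)
      (fun u v h h1 h2 => (hScrossW u v h h1 h2).1)
      hsepG1,
      CompSwitch.numSubtreesIn_congr S T A _ hagreeA,
      CompSwitch.numSubtreesIn_congr S T W _ hagreeW]
  have hsepG2 : ∀ u v, S.Adj u v → u ∉ U → u ∉ D → (v ∈ U ∨ v ∈ D) → u = x (k' + 2) := by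
    intro u v h huU huD hv
    rcases hcover u with hc | hc | hc | hc
    · exfalso
      obtain ⟨-, he⟩ := hScrossA u v h hc (fun hvA =>
        hv.elim (fun h' => hAU v hvA h') (fun h' => hAD v hvA h'))
      rcases hv with h' | h'
      · rw [he] at h'; exact hcU h'
      · rw [he] at h'; exact hcDn h'
    · exact absurd hc huU
    · exact (hScrossW u v h hc (fun hvW =>
        hv.elim (fun h' => hUW v h' hvW) (fun h' => hWD v hvW h'))).1
    · exact absurd hc huD
  have hcardG2 : G2.ncard =
      numSubtreesIn T U (x (k' + 1)) * numSubtreesIn T D (x (k' + 3)) := by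
    rw [hG2]
    rw [CompSwitch.fam_card S U D (x (k' + 1)) (x (k' + 3)) (x (k' + 2)) hbU hdD hUD hSbd hcU
      hcDn
      (fun u v h h1 h2 => (hScrossU u v h h1 h2).1)
      (fun u v h h1 h2 => (hScrossD u v h h1 h2).1)
      hsepG2,
      CompSwitch.numSubtreesIn_congr S T U _ hagreeU,
      CompSwitch.numSubtreesIn_congr S T D _ hagreeD]
  -- identification with the C-values
  have hvalA : numSubtreesIn T A (x k') = Cle k' := by
    rcases Nat.eq_zero_or_pos k' with rfl | hpos
    · rw [hCle0]
      have huniq : ∀ z, T.Adj (x 0) z → z = x 1 := by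
        intro z hz
        have h1 : z ∈ T.neighborFinset (x 0) := (T.mem_neighborFinset _ _).mpr hz
        have h2 : x 1 ∈ T.neighborFinset (x 0) := (T.mem_neighborFinset _ _).mpr
          (hadj 0 (by omega))
        obtain ⟨w0, hw0⟩ := Finset.card_eq_one.mp hleaf₁
        rw [hw0, Finset.mem_singleton] at h1 h2
        rw [h1, h2]
      rw [hA, show (0 : ℕ) + 1 = 1 from rfl,
        CompSwitch.reachSet_del_eq_singleton huniq]
      exact CompSwitch.numSubtreesIn_singleton T (x 0)
    · rw [hCle k' (Finset.mem_Icc.mpr ⟨hpos, by omega⟩), hA]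
  have hvalU : numSubtreesIn T U (x (k' + 1)) = C (k' + 1) := by
    rw [hC (k' + 1) (Finset.mem_Icc.mpr ⟨by omega, by omega⟩), hU]
  have hvalW : numSubtreesIn T W (x (k' + 2)) = C (k' + 2) := by
    rw [hC (k' + 2) (Finset.mem_Icc.mpr ⟨by omega, by omega⟩), hW]
  have hvalD : numSubtreesIn T D (x (k' + 3)) = Cge (k' + 3) := by
    rcases Nat.lt_or_ge (k' + 3) (n + 1) with hlt | hge
    · have hg := hCge (k' + 3) (Finset.mem_Icc.mpr ⟨by omega, by omega⟩)
      simp only [show k' + 3 - 1 = k' + 2 from rfl] at hg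
      rw [hg, hD]
    · have he : k' + 3 = n + 1 := by omega
      have he2 : k' + 2 = n := by omega
      rw [he, hCgeTop]
      have huniq : ∀ z, T.Adj (x (n + 1)) z → z = x n := by
        intro z hz
        have h1 : z ∈ T.neighborFinset (x (n + 1)) := (T.mem_neighborFinset _ _).mpr hz
        have h2 : x n ∈ T.neighborFinset (x (n + 1)) := (T.mem_neighborFinset _ _).mpr
          (hadj n le_rfl).symm
        obtain ⟨w0, hw0⟩ := Finset.card_eq_one.mp hleaf₂
        rw [hw0, Finset.mem_singleton] at h1 h2
        rw [h1, h2]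
      rw [hD, he, he2,
        show (s(x n, x (n + 1)) : Sym2 V) = s(x (n + 1), x n) from Sym2.eq_swap,
        CompSwitch.reachSet_del_eq_singleton huniq]
      exact CompSwitch.numSubtreesIn_singleton T (x (n + 1))
  -- counting
  have hdisjTS : Disjoint (SubT ∩ SubS) (SubT \ SubS) :=
    Set.disjoint_left.mpr fun {z} hz1 hz2 => hz2.2 hz1.2
  have hdisjST : Disjoint (SubS ∩ SubT) (SubS \ SubT) :=
    Set.disjoint_left.mpr fun {z} hz1 hz2 => hz2.2 hz1.2
  have hdisjF : Disjoint F1 F2 := Set.disjoint_left.mpr (by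
    intro s h1 h2
    rw [hF1] at h1
    rw [hF2] at h2
    exact h2.2.2.2 h1.2.2.1)
  have hdisjG : Disjoint G1 G2 := Set.disjoint_left.mpr (by
    intro s h1 h2
    rw [hG1] at h1
    rw [hG2] at h2
    exact h2.2.2.2 h1.2.2.1)
  have hsplitT : numSubtrees T = (SubT ∩ SubS).ncard + (F1.ncard + F2.ncard) := by
    have h0 : numSubtrees T = SubT.ncard := by rw [hSubT]; rfl
    rw [h0]
    calc SubT.ncard = ((SubT ∩ SubS) ∪ (SubT \ SubS)).ncard := by
          rw [Set.inter_union_diff]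
      _ = (SubT ∩ SubS).ncard + (SubT \ SubS).ncard :=
          Set.ncard_union_eq hdisjTS (Set.toFinite _) (Set.toFinite _)
      _ = (SubT ∩ SubS).ncard + (F1.ncard + F2.ncard) := by
          rw [hdiffT, Set.ncard_union_eq hdisjF (Set.toFinite _) (Set.toFinite _)]
  have hsplitS : numSubtrees S = (SubT ∩ SubS).ncard + (G1.ncard + G2.ncard) := by
    have h0 : numSubtrees S = SubS.ncard := by rw [hSubS]; rfl
    rw [h0]
    calc SubS.ncard = ((SubS ∩ SubT) ∪ (SubS \ SubT)).ncard := by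
          rw [Set.inter_union_diff]
      _ = (SubS ∩ SubT).ncard + (SubS \ SubT).ncard :=
          Set.ncard_union_eq hdisjST (Set.toFinite _) (Set.toFinite _)
      _ = (SubT ∩ SubS).ncard + (G1.ncard + G2.ncard) := by
          rw [hdiffS, Set.ncard_union_eq hdisjG (Set.toFinite _) (Set.toFinite _),
            Set.inter_comm]
  -- final arithmetic
  have e1 : numSubtrees T =
      (SubT ∩ SubS).ncard + (Cle k' * C (k' + 1) + C (k' + 2) * Cge (k' + 3)) := by
    rw [hsplitT, hcardF1, hcardF2, hvalA, hvalU, hvalW, hvalD]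
  have e2 : numSubtrees S =
      (SubT ∩ SubS).ncard + (Cle k' * C (k' + 2) + C (k' + 1) * Cge (k' + 3)) := by
    rw [hsplitS, hcardG1, hcardG2, hvalA, hvalU, hvalW, hvalD]
  have hbz : (C (k' + 2) : ℤ) < (C (k' + 1) : ℤ) := by exact_mod_cast h₂
  have hdz : (Cle k' : ℤ) < (Cge (k' + 3) : ℤ) := by exact_mod_cast h₁
  have key : (Cle k' * C (k' + 1) + C (k' + 2) * Cge (k' + 3) : ℤ) <
      (Cle k' * C (k' + 2) + C (k' + 1) * Cge (k' + 3) : ℤ) := by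
    nlinarith [mul_pos (sub_pos.mpr hbz) (sub_pos.mpr hdz)]
  constructor
  · have hlt : (numSubtrees T : ℤ) < (numSubtrees S : ℤ) := by
      rw [e1, e2]
      push_cast
      linarith
    exact_mod_cast hlt
  · rw [e1, e2]
    push_cast
    ring
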